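/- arXiv:2407.21505 — 4 statements merged into one kernel-verified Lean document; each statement's English description precedes it below -/
import Mathlib

section
/- Let F_m(s) denote the value C₁ of the continued fraction recursion C_{m+1} = 0, C_i(s) = (s γ̂_i + (γ_i + C_{i+1}(s))^{-1})^{-1}, built from symmetric positive definite p×p matrices γ₁,…,γ_m, γ̂₁,…,γ̂_m. Then for fixed s > 0 the sequence m ↦ F_m(s) is strictly increasing in the Loewner order: F_{m-1}(s) < F_m(s). -/
open Matrix

section AuxLemmas

variable {n : Type*} [Fintype n] [DecidableEq n]

/-- Congruence by an invertible matrix preserves positive definiteness. -/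
lemma myPosDef_conj {M : Matrix n n ℝ} (hM : M.PosDef) {N : Matrix n n ℝ}
    (hN : IsUnit N) : (Nᴴ * M * N).PosDef := by
  refine Matrix.PosDef.of_dotProduct_mulVec_pos (Matrix.isHermitian_conjTranspose_mul_mul N hM.1) fun x hx => ?_
  have hinj : Function.Injective N.mulVec := Matrix.mulVec_injective_iff_isUnit.mpr hN
  have hxN : N *ᵥ x ≠ 0 := by
    intro h; exact hx (hinj (by simpa using h))
  have := hM.dotProduct_mulVec_pos hxN
  rwa [star_mulVec, ← Matrix.dotProduct_mulVec, Matrix.mulVec_mulVec,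
    Matrix.mulVec_mulVec] at this

/-- A positive scalar multiple of a positive definite matrix is positive definite. -/
lemma myPosDef_smul {M : Matrix n n ℝ} (hM : M.PosDef) {c : ℝ} (hc : 0 < c) :
    (c • M).PosDef := by
  have ht : Mᵀ = M := by simpa using hM.1.eq
  refine Matrix.PosDef.of_dotProduct_mulVec_pos (by simp [Matrix.IsHermitian, conjTranspose_smul, ht]) fun x hx => ?_
  simp only [Matrix.smul_mulVec, dotProduct_smul, smul_eq_mul]
  exact mul_pos hc (hM.dotProduct_mulVec_pos hx)

set_option maxHeartbeats 1000000 in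
/-- Strict antitonicity of matrix inversion on positive definite matrices,
via the Woodbury-type identity `A⁻¹ - B⁻¹ = A⁻¹ ((B-A)⁻¹ + A⁻¹)⁻¹ A⁻¹`. -/
lemma myInv_sub_inv {A B : Matrix n n ℝ} (hA : A.PosDef)
    (hBA : (B - A).PosDef) : (A⁻¹ - B⁻¹).PosDef := by
  set E := B - A with hE
  have hMpd : (E⁻¹ + A⁻¹).PosDef := hBA.inv.add hA.inv
  set M := (E⁻¹ + A⁻¹)⁻¹ with hMdef
  haveI := hA.isUnit.invertible
  haveI := hBA.isUnit.invertible
  haveI := hMpd.isUnit.invertible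
  have hA1 : A * A⁻¹ = 1 := Matrix.mul_inv_of_invertible A
  have hE1 : E * E⁻¹ = 1 := Matrix.mul_inv_of_invertible E
  have hM1 : (E⁻¹ + A⁻¹) * M = 1 := Matrix.mul_inv_of_invertible _
  have h1 : B = A + E := by simp [hE]
  have key : B * (A⁻¹ - A⁻¹ * M * A⁻¹) = 1 := by
    have expand : B * (A⁻¹ - A⁻¹ * M * A⁻¹)
        = A * A⁻¹ + E * A⁻¹ - (A * A⁻¹ + E * A⁻¹) * M * A⁻¹ := by
      rw [h1]; noncomm_ring
    rw [expand, hA1]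
    have h2 : (1 : Matrix n n ℝ) + E * A⁻¹ = E * (E⁻¹ + A⁻¹) := by
      rw [mul_add, hE1]
    have h3 : ((1 : Matrix n n ℝ) + E * A⁻¹) * M * A⁻¹ = E * A⁻¹ := by
      rw [h2, mul_assoc E, hM1, mul_one]
    rw [h3, add_sub_cancel_right]
  have hBinv : B⁻¹ = A⁻¹ - A⁻¹ * M * A⁻¹ := Matrix.inv_eq_right_inv key
  have hdiff : A⁻¹ - B⁻¹ = A⁻¹ * M * A⁻¹ := by rw [hBinv, sub_sub_cancel]
  rw [hdiff]
  have := myPosDef_conj hMpd.inv hA.inv.isUnit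
  rwa [hA.inv.1, ← hMdef] at this

end AuxLemmas

/-- `cfrac s γ γh i k` is the matrix continued fraction `C_i(s)` with `k` floors remaining:
`C_i = (s γ̂_i + (γ_i + C_{i+1})⁻¹)⁻¹`, terminated with the zero matrix (`k = 0`).
The Gauss approximation of depth `m` is `F_m(s) = cfrac s γ γh 1 m`. -/
noncomputable def cfrac {p : ℕ} (s : ℝ) (γ γh : ℕ → Matrix (Fin p) (Fin p) ℝ) :
    ℕ → ℕ → Matrix (Fin p) (Fin p) ℝ
  | _, 0 => 0
  | i, k + 1 => (s • γh i + (γ i + cfrac s γ γh (i + 1) k)⁻¹)⁻¹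

section CfracLemmas

variable {p : ℕ} {s : ℝ} {γ γh : ℕ → Matrix (Fin p) (Fin p) ℝ}

lemma cfrac_zero (i : ℕ) : cfrac s γ γh i 0 = 0 := rfl

lemma cfrac_succ (i k : ℕ) :
    cfrac s γ γh i (k + 1) = (s • γh i + (γ i + cfrac s γ γh (i + 1) k)⁻¹)⁻¹ := rfl

lemma cfrac_posSemidef (hγ : ∀ i, (γ i).PosDef) (hγh : ∀ i, (γh i).PosDef)
    (hs : 0 < s) : ∀ (k i : ℕ), (cfrac s γ γh i k).PosSemidef := by
  intro k
  induction k with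
  | zero => intro i; exact Matrix.PosSemidef.zero
  | succ k ih =>
    intro i
    rw [cfrac_succ]
    exact (((myPosDef_smul (hγh i) hs).add
      ((hγ i).add_posSemidef (ih (i + 1))).inv).inv).posSemidef

/-- Each step of the depth increases the continued fraction in the Loewner order. -/
lemma cfrac_step_posDef (hγ : ∀ i, (γ i).PosDef) (hγh : ∀ i, (γh i).PosDef)
    (hs : 0 < s) :
    ∀ (k i : ℕ), (cfrac s γ γh i (k + 1) - cfrac s γ γh i k).PosDef := by
  intro k
  induction k with
  | zero =>
    intro i
    rw [cfrac_zero, cfrac_succ, sub_zero]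
    exact ((myPosDef_smul (hγh i) hs).add
      ((hγ i).add_posSemidef Matrix.PosSemidef.zero).inv).inv
  | succ k ih =>
    intro i
    -- X = γ i + C_{i+1}^{(k)},  Y = γ i + C_{i+1}^{(k+1)};  Y - X posdef
    have hCk := cfrac_posSemidef hγ hγh hs k (i + 1)
    have hX : (γ i + cfrac s γ γh (i + 1) k).PosDef := (hγ i).add_posSemidef hCk
    have hYX : ((γ i + cfrac s γ γh (i + 1) (k + 1))
        - (γ i + cfrac s γ γh (i + 1) k)).PosDef := by
      have := ih (i + 1)
      simpa [add_sub_add_left_eq_sub] using this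
    -- inverse is strictly antitone
    have hinv := myInv_sub_inv hX hYX
    -- U = s γ̂_i + Y⁻¹, V = s γ̂_i + X⁻¹ ; V - U = X⁻¹ - Y⁻¹ posdef
    have hU : (s • γh i + (γ i + cfrac s γ γh (i + 1) (k + 1))⁻¹).PosDef := by
      have hCk1 := cfrac_posSemidef hγ hγh hs (k + 1) (i + 1)
      exact (myPosDef_smul (hγh i) hs).add ((hγ i).add_posSemidef hCk1).inv
    have hVU : ((s • γh i + (γ i + cfrac s γ γh (i + 1) k)⁻¹)
        - (s • γh i + (γ i + cfrac s γ γh (i + 1) (k + 1))⁻¹)).PosDef := by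
      simpa [add_sub_add_left_eq_sub] using hinv
    rw [cfrac_succ i (k + 1), cfrac_succ i k]
    exact myInv_sub_inv hU hVU

end CfracLemmas

/-- For fixed `s > 0`, the sequence of Gauss continued fractions `m ↦ F_m(s)` is strictly
increasing in the Loewner order: `F_{m-1}(s) < F_m(s)`. -/
theorem stmt_6 (p : ℕ) (γ γh : ℕ → Matrix (Fin p) (Fin p) ℝ)
    (hγ : ∀ i, (γ i).PosDef) (hγh : ∀ i, (γh i).PosDef) (s : ℝ) (hs : 0 < s) :
    ∀ m : ℕ, (cfrac s γ γh 1 (m + 1) - cfrac s γ γh 1 m).PosDef := by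
  intro m
  exact cfrac_step_posDef hγ hγh hs m 1
end

section
/- With F_m(s) and F̃_m(s) the Gauss and Gauss-Radau continued fractions of depth m built from the same symmetric positive definite matrices γ_i, γ̂_i (F_m terminates with C_{m+1} = 0, F̃_m omits the last floor γ_m), for every s > 0 one has F_m(s) ≤ F̃_m(s) in the Loewner order. -/
open Matrix

/-- Woodbury-style algebraic identity in a ring. -/
lemma wb_aux {R : Type*} [Ring R] (A x C y : R) (hx : A * x = 1)
    (hy : (1 + C * x * C) * y = 1) :
    (A + C * C) * (x - x * C * y * C * x) = 1 := by
  have h1 : C * ((C * x * C) * y) = C * ((1 + C * x * C) * y) - C * y := by noncomm_ring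
  rw [hy] at h1
  have h2 : (A + C * C) * (x - x * C * y * C * x) =
      (A * x) - (A * x) * (C * y * C * x) + C * C * x - (C * ((C * x * C) * y)) * (C * x) := by
    noncomm_ring
  rw [hx, h1] at h2
  rw [h2]; noncomm_ring

lemma smul_posDef {p : ℕ} {M : Matrix (Fin p) (Fin p) ℝ} (hM : M.PosDef) {s : ℝ} (hs : 0 < s) :
    (s • M).PosDef := by
  refine Matrix.PosDef.of_dotProduct_mulVec_pos ?_ (fun x hx => ?_)
  · unfold Matrix.IsHermitian
    rw [conjTranspose_smul, hM.1]
    simp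
  · rw [smul_mulVec, dotProduct_smul, smul_eq_mul]
    exact mul_pos hs (hM.dotProduct_mulVec_pos hx)

open scoped MatrixOrder in
/-- inverse is antitone on positive definite matrices -/
lemma inv_sub_inv_psd {p : ℕ} {A B : Matrix (Fin p) (Fin p) ℝ}
    (hA : A.PosDef) (hBA : (B - A).PosSemidef) : (A⁻¹ - B⁻¹).PosSemidef := by
  set C := CFC.sqrt (B - A) with hC
  have hCpsd : C.PosSemidef := (CFC.sqrt_nonneg (B - A)).posSemidef
  have hCC : C * C = B - A := CFC.sqrt_mul_sqrt_self (B - A) hBA.nonneg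
  have hBeq : B = A + C * C := by rw [hCC]; abel
  have hAx : A * A⁻¹ = 1 := A.mul_nonsing_inv (isUnit_iff_ne_zero.mpr hA.det_pos.ne')
  have hAinv : A⁻¹.PosDef := hA.inv
  set M : Matrix (Fin p) (Fin p) ℝ := 1 + C * A⁻¹ * C with hMdef
  have hCAC : (Cᴴ * A⁻¹ * C).PosSemidef := hAinv.posSemidef.conjTranspose_mul_mul_same C
  rw [hCpsd.isHermitian] at hCAC
  have hM : M.PosDef := Matrix.PosDef.add_posSemidef Matrix.PosDef.one hCAC
  have hMy : M * M⁻¹ = 1 := M.mul_nonsing_inv (isUnit_iff_ne_zero.mpr hM.det_pos.ne')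
  have hBinv : B⁻¹ = A⁻¹ - A⁻¹ * C * M⁻¹ * C * A⁻¹ := by
    rw [hBeq]
    exact Matrix.inv_eq_right_inv (wb_aux A A⁻¹ C M⁻¹ hAx (by rw [← hMdef]; exact hMy))
  have hdiff : A⁻¹ - B⁻¹ = (C * A⁻¹)ᴴ * M⁻¹ * (C * A⁻¹) := by
    rw [hBinv, conjTranspose_mul, hCpsd.isHermitian, hAinv.isHermitian]
    noncomm_ring
  rw [hdiff]
  exact hM.inv.posSemidef.conjTranspose_mul_mul_same _

/-- Gauss-Radau continued fraction, identical except the last floor is `(s γ̂)⁻¹`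
(the last `γ` is omitted): `F̃_m(s) = cfracR s γ γh 1 m`. -/
noncomputable def cfracR {p : ℕ} (s : ℝ) (γ γh : ℕ → Matrix (Fin p) (Fin p) ℝ) :
    ℕ → ℕ → Matrix (Fin p) (Fin p) ℝ
  | _, 0 => 0
  | i, 1 => (s • γh i)⁻¹
  | i, k + 2 => (s • γh i + (γ i + cfracR s γ γh (i + 1) (k + 1))⁻¹)⁻¹

section main
variable {p : ℕ} (γ γh : ℕ → Matrix (Fin p) (Fin p) ℝ)
  (hγ : ∀ i, (γ i).PosDef) (hγh : ∀ i, (γh i).PosDef) (s : ℝ) (hs : 0 < s)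

include hγ hγh hs in
lemma cfrac_psd : ∀ k i, (cfrac s γ γh i k).PosSemidef := by
  intro k
  induction k with
  | zero => intro i; simp only [cfrac]; exact .zero
  | succ k ih =>
    intro i
    simp only [cfrac]
    exact ((smul_posDef (hγh i) hs).add_posSemidef
      (((hγ i).add_posSemidef (ih (i + 1))).inv.posSemidef)).inv.posSemidef

include hγ hγh hs in
lemma cfracR_posdef : ∀ k i, (cfracR s γ γh i (k + 1)).PosDef := by
  intro k
  induction k with
  | zero => intro i; simp only [cfracR]; exact (smul_posDef (hγh i) hs).inv
  | succ k ih =>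
    intro i
    simp only [cfracR]
    exact ((smul_posDef (hγh i) hs).add_posSemidef
      (((hγ i).add_posSemidef (ih (i + 1)).posSemidef).inv.posSemidef)).inv

include hγ hγh hs in
lemma cfrac_key : ∀ k i, (cfracR s γ γh i (k + 1) - cfrac s γ γh i (k + 1)).PosSemidef := by
  intro k
  induction k with
  | zero =>
    intro i
    simp only [cfracR, cfrac]
    have hA : (s • γh i).PosDef := smul_posDef (hγh i) hs
    refine inv_sub_inv_psd hA ?_
    have : s • γh i + (γ i + (0 : Matrix (Fin p) (Fin p) ℝ))⁻¹ - s • γh i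
        = (γ i + 0)⁻¹ := by abel
    rw [this, add_zero]
    exact (hγ i).inv.posSemidef
  | succ k ih =>
    intro i
    rw [show cfracR s γ γh i (k + 1 + 1)
        = (s • γh i + (γ i + cfracR s γ γh (i + 1) (k + 1))⁻¹)⁻¹ from by simp [cfracR],
      show cfrac s γ γh i (k + 1 + 1)
        = (s • γh i + (γ i + cfrac s γ γh (i + 1) (k + 1))⁻¹)⁻¹ from by simp [cfrac]]
    set G := cfrac s γ γh (i + 1) (k + 1) with hG
    set R := cfracR s γ γh (i + 1) (k + 1) with hR
    have hGpsd : G.PosSemidef := cfrac_psd γ γh hγ hγh s hs (k + 1) (i + 1)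
    have hRG : (R - G).PosSemidef := ih (i + 1)
    have hinner : ((γ i + G)⁻¹ - (γ i + R)⁻¹).PosSemidef := by
      refine inv_sub_inv_psd ((hγ i).add_posSemidef hGpsd) ?_
      have : γ i + R - (γ i + G) = R - G := by abel
      rw [this]; exact hRG
    refine inv_sub_inv_psd ((smul_posDef (hγh i) hs).add_posSemidef
      (((hγ i).add_posSemidef (cfracR_posdef γ γh hγ hγh s hs k (i + 1)).posSemidef).inv.posSemidef)) ?_
    have : s • γh i + (γ i + G)⁻¹ - (s • γh i + (γ i + R)⁻¹)
        = (γ i + G)⁻¹ - (γ i + R)⁻¹ := by abel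
    rw [this]; exact hinner

end main

/-- For every `s > 0`, the Gauss and Gauss-Radau continued fractions of the same depth `m`
built from the same symmetric positive definite data satisfy `F_m(s) ≤ F̃_m(s)` in the
Loewner order. -/
theorem stmt_8 (p : ℕ) (γ γh : ℕ → Matrix (Fin p) (Fin p) ℝ)
    (hγ : ∀ i, (γ i).PosDef) (hγh : ∀ i, (γh i).PosDef) (s : ℝ) (hs : 0 < s)
    (m : ℕ) (hm : 1 ≤ m) :
    (cfracR s γ γh 1 m - cfrac s γ γh 1 m).PosSemidef := by
  obtain ⟨k, rfl⟩ : ∃ k, m = k + 1 := ⟨m - 1, (Nat.succ_pred_eq_of_pos hm).symm⟩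
  exact cfrac_key γ γh hγ hγh s hs k 1
end

section
/- Let F̃_m(s) be the Gauss-Radau continued fraction of depth m, where the recursion C_i(s) = (s γ̂_i + (γ_i + C_{i+1}(s))^{-1})^{-1} terminates with C_m(s) = (s γ̂_m)^{-1}, all γ_i, γ̂_i symmetric positive definite p×p matrices. Then lim_{s→0⁺} s·F̃_m(s) = (γ̂₁ + γ̂₂ + … + γ̂_m)^{-1}; in particular F̃_m has a simple pole at s = 0 with residue of rank p. -/
open Matrix Filter

section aux

variable {p : ℕ}

lemma my_posdef_add {A B : Matrix (Fin p) (Fin p) ℝ} (hA : A.PosDef) (hB : B.PosDef) :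
    (A + B).PosDef :=
  hA.add hB

lemma my_posdef_sum (γh : ℕ → Matrix (Fin p) (Fin p) ℝ) :
    ∀ n i, (∀ j, i ≤ j → j < i + (n + 1) → (γh j).PosDef) →
      (∑ j ∈ Finset.range (n + 1), γh (i + j)).PosDef := by
  intro n
  induction n with
  | zero => intro i h; simpa using h i le_rfl (by omega)
  | succ n ih =>
      intro i h
      rw [Finset.sum_range_succ]
      exact my_posdef_add (ih i fun j h1 h2 => h j h1 (by omega))
        (h (i + (n + 1)) (by omega) (by omega))

lemma my_smul_inv (s : ℝ) (hs : s ≠ 0) (A : Matrix (Fin p) (Fin p) ℝ) :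
    (s • A)⁻¹ = s⁻¹ • A⁻¹ := by
  by_cases h : IsUnit A.det
  · apply Matrix.inv_eq_right_inv
    rw [Matrix.smul_mul, Matrix.mul_smul, Matrix.mul_nonsing_inv A h, smul_smul,
      mul_inv_cancel₀ hs, one_smul]
  · rw [Matrix.nonsing_inv_apply_not_isUnit A h,
      Matrix.nonsing_inv_apply_not_isUnit, smul_zero]
    rw [Matrix.det_smul]
    exact fun hu => h (isUnit_of_mul_isUnit_right hu)

lemma cfrac_base (s : ℝ) (hs : s ≠ 0) (γ γh : ℕ → Matrix (Fin p) (Fin p) ℝ) (i : ℕ) :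
    s • cfracR s γ γh i 1 = (γh i)⁻¹ := by
  rw [cfracR, my_smul_inv s hs, smul_smul, mul_inv_cancel₀ hs, one_smul]

lemma cfrac_step (s : ℝ) (hs : s ≠ 0) (γ γh : ℕ → Matrix (Fin p) (Fin p) ℝ) (i n : ℕ) :
    s • cfracR s γ γh i (n + 2) =
      (γh i + (s • γ i + s • cfracR s γ γh (i + 1) (n + 1))⁻¹)⁻¹ := by
  have hkey : γ i + cfracR s γ γh (i + 1) (n + 1) =
      s⁻¹ • (s • γ i + s • cfracR s γ γh (i + 1) (n + 1)) := by
    rw [smul_add, smul_smul, smul_smul, inv_mul_cancel₀ hs, one_smul, one_smul]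
  rw [cfracR, hkey, my_smul_inv s⁻¹ (inv_ne_zero hs), inv_inv]
  have : s • γh i + s • (s • γ i + s • cfracR s γ γh (i + 1) (n + 1))⁻¹ =
      s • (γh i + (s • γ i + s • cfracR s γ γh (i + 1) (n + 1))⁻¹) := by
    rw [smul_add]
  rw [this, my_smul_inv s hs, smul_smul, mul_inv_cancel₀ hs, one_smul]

lemma contAt_inv (A : Matrix (Fin p) (Fin p) ℝ) (h : A.det ≠ 0) :
    ContinuousAt Inv.inv A := by
  refine continuousAt_matrix_inv A ?_
  rw [Ring.inverse_eq_inv']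
  exact continuousAt_inv₀ h

lemma tendsto_aux (γ γh : ℕ → Matrix (Fin p) (Fin p) ℝ) :
    ∀ n i, (∀ j, i ≤ j → j < i + (n + 1) → (γh j).PosDef) →
      (∀ j, i ≤ j → j + 1 < i + (n + 1) → (γ j).PosDef) →
      Tendsto (fun s : ℝ => s • cfracR s γ γh i (n + 1)) (nhdsWithin 0 (Set.Ioi 0))
        (nhds (∑ j ∈ Finset.range (n + 1), γh (i + j))⁻¹) := by
  intro n
  induction n with
  | zero =>
      intro i hγh _
      have heq : (fun s : ℝ => s • cfracR s γ γh i 1) =ᶠ[nhdsWithin 0 (Set.Ioi 0)]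
          fun _ => (γh i)⁻¹ := by
        filter_upwards [self_mem_nhdsWithin] with s hs
        exact cfrac_base s (ne_of_gt hs) γ γh i
      rw [show (∑ j ∈ Finset.range 1, γh (i + j)) = γh i by simp]
      exact Tendsto.congr' heq.symm tendsto_const_nhds
  | succ n ih =>
      intro i hγh hγ
      set S : Matrix (Fin p) (Fin p) ℝ := ∑ j ∈ Finset.range (n + 1), γh (i + 1 + j) with hS
      have hSpos : S.PosDef := my_posdef_sum γh n (i + 1) fun j h1 h2 => hγh j (by omega) (by omega)
      have hT : Tendsto (fun s : ℝ => s • cfracR s γ γh (i + 1) (n + 1))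
          (nhdsWithin 0 (Set.Ioi 0)) (nhds S⁻¹) :=
        ih (i + 1) (fun j h1 h2 => hγh j (by omega) (by omega))
          (fun j h1 h2 => hγ j (by omega) (by omega))
      -- inner tendsto : s • γ i + s • C → S⁻¹
      have hγconst : Tendsto (fun s : ℝ => s • γ i) (nhdsWithin 0 (Set.Ioi 0))
          (nhds (0 : Matrix (Fin p) (Fin p) ℝ)) := by
        have : Tendsto (fun s : ℝ => s • γ i) (nhds 0) (nhds ((0:ℝ) • γ i)) :=
          (continuous_id.smul continuous_const).tendsto 0
        rw [zero_smul] at this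
        exact this.mono_left nhdsWithin_le_nhds
      have hinner : Tendsto (fun s : ℝ => s • γ i + s • cfracR s γ γh (i + 1) (n + 1))
          (nhdsWithin 0 (Set.Ioi 0)) (nhds S⁻¹) := by
        simpa using hγconst.add hT
      have hSdet : S.det ≠ 0 := ne_of_gt hSpos.det_pos
      have hSinvdet : (S⁻¹).det ≠ 0 := by
        rw [Matrix.det_nonsing_inv, Ring.inverse_eq_inv']
        exact inv_ne_zero hSdet
      have h1 : Tendsto (fun s : ℝ => (s • γ i + s • cfracR s γ γh (i + 1) (n + 1))⁻¹)
          (nhdsWithin 0 (Set.Ioi 0)) (nhds S) := by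
        have := (contAt_inv S⁻¹ hSinvdet).tendsto.comp hinner
        rwa [Matrix.nonsing_inv_nonsing_inv S (isUnit_iff_ne_zero.2 hSdet)] at this
      have h2 : Tendsto (fun s : ℝ => γh i + (s • γ i + s • cfracR s γ γh (i + 1) (n + 1))⁻¹)
          (nhdsWithin 0 (Set.Ioi 0)) (nhds (γh i + S)) :=
        tendsto_const_nhds.add h1
      have hsum : γh i + S = ∑ j ∈ Finset.range (n + 2), γh (i + j) := by
        rw [Finset.sum_range_succ' (fun j => γh (i + j)) (n + 1)]
        have h0 : (∑ j ∈ Finset.range (n + 1), γh (i + (j + 1))) = S :=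
          Finset.sum_congr rfl fun j _ => by rw [show i + (j + 1) = i + 1 + j by omega]
        rw [h0, add_zero, add_comm]
      have hTpos : (γh i + S).PosDef :=
        my_posdef_add (hγh i le_rfl (by omega)) hSpos
      have h3 : Tendsto (fun s : ℝ =>
            (γh i + (s • γ i + s • cfracR s γ γh (i + 1) (n + 1))⁻¹)⁻¹)
          (nhdsWithin 0 (Set.Ioi 0)) (nhds (γh i + S)⁻¹) :=
        (contAt_inv _ (ne_of_gt hTpos.det_pos)).tendsto.comp h2
      rw [hsum] at h3
      refine Tendsto.congr' ?_ h3
      filter_upwards [self_mem_nhdsWithin] with s hs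
      exact (cfrac_step s (ne_of_gt hs) γ γh i n).symm

end aux

/-- `lim_{s → 0⁺} s · F̃_m(s) = (γ̂₁ + ⋯ + γ̂_m)⁻¹`; in particular the Gauss-Radau continued
fraction has a simple pole at `s = 0` whose residue has full rank `p`. -/
theorem stmt_10 (p : ℕ) (γ γh : ℕ → Matrix (Fin p) (Fin p) ℝ) (m : ℕ) (hm : 1 ≤ m)
    (hγ : ∀ i, 1 ≤ i → i + 1 ≤ m → (γ i).PosDef)
    (hγh : ∀ i, 1 ≤ i → i ≤ m → (γh i).PosDef) :
    Tendsto (fun s : ℝ => s • cfracR s γ γh 1 m)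
        (nhdsWithin 0 (Set.Ioi 0))
        (nhds (∑ i ∈ Finset.range m, γh (i + 1))⁻¹) ∧
      ((∑ i ∈ Finset.range m, γh (i + 1))⁻¹ : Matrix (Fin p) (Fin p) ℝ).rank = p := by
  obtain ⟨n, rfl⟩ : ∃ n, m = n + 1 := ⟨m - 1, by omega⟩
  have hsum : (∑ i ∈ Finset.range (n + 1), γh (i + 1)) =
      ∑ j ∈ Finset.range (n + 1), γh (1 + j) :=
    Finset.sum_congr rfl fun j _ => by rw [Nat.add_comm j 1]
  have hpos : (∑ i ∈ Finset.range (n + 1), γh (i + 1)).PosDef := by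
    rw [hsum]
    exact my_posdef_sum γh n 1 fun j h1 h2 => hγh j h1 (by omega)
  constructor
  · rw [hsum]
    exact tendsto_aux γ γh n 1 (fun j h1 h2 => hγh j h1 (by omega))
      (fun j h1 h2 => hγ j h1 (by omega))
  · have hUnit : IsUnit (∑ i ∈ Finset.range (n + 1), γh (i + 1))⁻¹ := by
      refine (Matrix.isUnit_iff_isUnit_det _).2 (isUnit_iff_ne_zero.2 ?_)
      rw [Matrix.det_nonsing_inv, Ring.inverse_eq_inv']
      exact inv_ne_zero (ne_of_gt hpos.det_pos)
    rw [Matrix.rank_of_isUnit _ hUnit, Fintype.card_fin]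
end

section
/- Let T_m ∈ ℝ^{m×m} be the symmetric tridiagonal Jacobi matrix produced by m steps of the Lanczos algorithm applied to a symmetric positive definite A ∈ ℝ^{n×n} and unit vector b (so A Q_m = Q_m T_m + β_{m+1} q_{m+1} e_m^T with Q_m^T Q_m = I, Q_m e₁ = b). Then for every s > 0, e₁^T (T_m + sI)^{-1} e₁ ≤ b^T (A + sI)^{-1} b. -/
open Matrix

lemma aux_dot_mulVec {n m : ℕ} (Q : Matrix (Fin n) (Fin m) ℝ) (y : Fin m → ℝ)
    (w : Fin n → ℝ) : (Q *ᵥ y) ⬝ᵥ w = y ⬝ᵥ (Qᵀ *ᵥ w) := by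
  rw [dotProduct_comm (Q *ᵥ y) w, Matrix.dotProduct_mulVec, ← Matrix.mulVec_transpose,
    dotProduct_comm]

lemma aux_qform_ineq {n : ℕ} (M : Matrix (Fin n) (Fin n) ℝ) (hM : M.PosDef)
    (v x : Fin n → ℝ) :
    2 * (x ⬝ᵥ v) - x ⬝ᵥ (M *ᵥ x) ≤ v ⬝ᵥ (M⁻¹ *ᵥ v) := by
  have hdet : IsUnit M.det := hM.det_pos.ne'.isUnit
  have hinv : M * M⁻¹ = 1 := Matrix.mul_nonsing_inv M hdet
  set u : Fin n → ℝ := M⁻¹ *ᵥ v with hu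
  have h1 : M *ᵥ u = v := by
    rw [hu, Matrix.mulVec_mulVec, hinv, Matrix.one_mulVec]
  have hsymm : Mᵀ = M := hM.isHermitian.eq
  have h3 : u ⬝ᵥ (M *ᵥ x) = v ⬝ᵥ x := by
    rw [Matrix.dotProduct_mulVec, ← Matrix.mulVec_transpose, hsymm, h1]
  have h2 : u ⬝ᵥ v = v ⬝ᵥ (M⁻¹ *ᵥ v) := by rw [dotProduct_comm, hu]
  have hnn : 0 ≤ (u - x) ⬝ᵥ (M *ᵥ (u - x)) := by
    have := hM.posSemidef.dotProduct_mulVec_nonneg (u - x)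
    simpa using this
  have hexp : (u - x) ⬝ᵥ (M *ᵥ (u - x))
      = u ⬝ᵥ (M *ᵥ u) - u ⬝ᵥ (M *ᵥ x) - (x ⬝ᵥ (M *ᵥ u) - x ⬝ᵥ (M *ᵥ x)) := by
    rw [Matrix.mulVec_sub, sub_dotProduct, dotProduct_sub,
      dotProduct_sub]
  rw [hexp, h1, h3] at hnn
  have hvx : x ⬝ᵥ v = v ⬝ᵥ x := dotProduct_comm _ _
  linarith

/-- Gauss quadrature lower bound: if `Q` has orthonormal columns spanning the Krylov space
`span{b, Ab, …, A^{m-1}b}` with first column the unit vector `b`, and `T = Qᵀ A Q` is the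
Lanczos Jacobi matrix, then for every `s > 0`,
`e₁ᵀ (T + sI)⁻¹ e₁ ≤ bᵀ (A + sI)⁻¹ b`. -/
theorem stmt_12 (n m : ℕ) (hm : 0 < m)
    (A : Matrix (Fin n) (Fin n) ℝ) (hA : A.PosDef)
    (b : Fin n → ℝ) (hb : b ⬝ᵥ b = 1)
    (Q : Matrix (Fin n) (Fin m) ℝ) (hQ : Qᵀ * Q = 1)
    (hQ1 : (fun i => Q i ⟨0, hm⟩) = b)
    (hspan : Submodule.span ℝ (Set.range fun j : Fin m => Qᵀ j)
           = Submodule.span ℝ (Set.range fun k : Fin m => (A ^ (k : ℕ)) *ᵥ b))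
    (T : Matrix (Fin m) (Fin m) ℝ) (hT : T = Qᵀ * A * Q)
    (e₁ : Fin m → ℝ) (he₁ : e₁ = fun j : Fin m => if (j : ℕ) = 0 then (1 : ℝ) else 0)
    (s : ℝ) (hs : 0 < s) :
    e₁ ⬝ᵥ ((T + s • (1 : Matrix (Fin m) (Fin m) ℝ))⁻¹ *ᵥ e₁)
      ≤ b ⬝ᵥ ((A + s • (1 : Matrix (Fin n) (Fin n) ℝ))⁻¹ *ᵥ b) := by
  set M : Matrix (Fin n) (Fin n) ℝ := A + s • (1 : Matrix (Fin n) (Fin n) ℝ) with hM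
  set N : Matrix (Fin m) (Fin m) ℝ := T + s • (1 : Matrix (Fin m) (Fin m) ℝ) with hN
  have hsI : (s • (1 : Matrix (Fin n) (Fin n) ℝ)).PosSemidef := by
    rw [Matrix.smul_one_eq_diagonal]
    exact Matrix.PosSemidef.diagonal fun _ => hs.le
  have hMpd : M.PosDef := hA.add_posSemidef hsI
  have hMs : Mᵀ = M := hMpd.isHermitian.eq
  have hNQ : N = Qᵀ * M * Q := by
    rw [hN, hM, hT, Matrix.mul_add, Matrix.add_mul, Matrix.mul_smul, Matrix.smul_mul,
      Matrix.mul_one, hQ]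
  have hQinj : ∀ y : Fin m → ℝ, Q *ᵥ y = 0 → y = 0 := by
    intro y hy
    have : (Qᵀ * Q) *ᵥ y = Qᵀ *ᵥ (Q *ᵥ y) := (Matrix.mulVec_mulVec _ _ _).symm
    rw [hQ, Matrix.one_mulVec, hy, Matrix.mulVec_zero] at this
    exact this
  have hquad : ∀ y : Fin m → ℝ, y ⬝ᵥ ((Qᵀ * M * Q) *ᵥ y) = (Q *ᵥ y) ⬝ᵥ (M *ᵥ (Q *ᵥ y)) := by
    intro y
    rw [aux_dot_mulVec, Matrix.mulVec_mulVec, Matrix.mulVec_mulVec]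
  have hNpd : N.PosDef := by
    rw [hNQ]
    refine Matrix.PosDef.of_dotProduct_mulVec_pos ?_ ?_
    · have h : (Qᵀ * M * Q)ᵀ = Qᵀ * Mᵀ * Q := by
        rw [Matrix.transpose_mul, Matrix.transpose_mul, Matrix.transpose_transpose,
          Matrix.mul_assoc]
      show (Qᵀ * M * Q)ᵀ = Qᵀ * M * Q
      rw [h, hMs]
    · intro y hy
      have hQy : Q *ᵥ y ≠ 0 := fun h => hy (hQinj y h)
      have hpos := hMpd.dotProduct_mulVec_pos hQy
      simp only [star_trivial] at hpos ⊢
      rw [hquad y]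
      exact hpos
  have he : Qᵀ *ᵥ b = e₁ := by
    funext j
    have h0 : (Qᵀ *ᵥ b) j = (Qᵀ * Q) j ⟨0, hm⟩ := by
      simp [Matrix.mulVec, Matrix.mul_apply, dotProduct, ← hQ1]
    rw [h0, hQ, he₁]
    by_cases hj : (j : ℕ) = 0
    · have hj' : j = ⟨0, hm⟩ := Fin.ext hj
      simp [hj', hj, Matrix.one_apply]
    · have hj' : j ≠ ⟨0, hm⟩ := fun h => hj (by rw [h])
      simp [Matrix.one_apply, hj', hj]
  set y : Fin m → ℝ := N⁻¹ *ᵥ e₁ with hy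
  have hNinv : N * N⁻¹ = 1 := Matrix.mul_nonsing_inv N hNpd.det_pos.ne'.isUnit
  have hNy : N *ᵥ y = e₁ := by rw [hy, Matrix.mulVec_mulVec, hNinv, Matrix.one_mulVec]
  have hxb : (Q *ᵥ y) ⬝ᵥ b = e₁ ⬝ᵥ (N⁻¹ *ᵥ e₁) := by
    rw [aux_dot_mulVec, he, dotProduct_comm, hy]
  have hxMx : (Q *ᵥ y) ⬝ᵥ (M *ᵥ (Q *ᵥ y)) = e₁ ⬝ᵥ (N⁻¹ *ᵥ e₁) := by
    rw [← hquad y, ← hNQ, hNy, dotProduct_comm, hy]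
  have key := aux_qform_ineq M hMpd b (Q *ᵥ y)
  rw [hxb, hxMx] at key
  linarith
end
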